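/- Let G be a finite group with minimal normal subgroups N₁ ≅ (C_p)^a and N₂ ≅ (C_q)^b where a ≥ 3 and b ≥ 2 (p, q primes, possibly equal but N₁ ≠ N₂). Then G has two non-conjugate core-free subgroups H₁, H₂ with b(G,H_i) ≥ 3 for i = 1,2. -/

import Mathlib

/-- The conjugate subgroup `g⁻¹ H g`. -/
def conjSub {G : Type*} [Group G] (H : Subgroup G) (g : G) : Subgroup G :=
  H.map (MulAut.conj g).toMonoidHom

/-- `N` is a minimal normal subgroup of `G`. -/
def IsMinNormal {G : Type*} [Group G] (N : Subgroup G) : Prop :=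
  N ≠ ⊥ ∧ N.Normal ∧ ∀ M : Subgroup G, M.Normal → M ≤ N → M = ⊥ ∨ M = N

open Subgroup

private lemma map_conj_self' {G : Type*} [Group G] (N : Subgroup G) (hN : N.Normal) (c : G) :
    N.map (MulAut.conj c).symm.toMonoidHom = N := by
  ext x
  constructor
  · rintro ⟨n, hn, rfl⟩
    simpa [MulAut.conj_symm_apply] using hN.conj_mem n hn c⁻¹
  · intro hx
    refine ⟨c * x * c⁻¹, hN.conj_mem x hx c, ?_⟩
    simp [MulAut.conj_symm_apply]
    group

private lemma relindex_conjSub {G : Type*} [Group G] (H N : Subgroup G) (hN : N.Normal)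
    (g : G) : (conjSub H g).relIndex N = H.relIndex N := by
  have h1 : conjSub H g = H.comap (MulAut.conj g).symm.toMonoidHom := by
    ext x
    simp only [conjSub, Subgroup.mem_map, Subgroup.mem_comap]
    constructor
    · rintro ⟨n, hn, rfl⟩
      have h : g⁻¹ * (g * n * g⁻¹) * g = n := by group
      show g⁻¹ * (g * n * g⁻¹) * g ∈ H
      rw [h]; exact hn
    · intro hx
      exact ⟨(MulAut.conj g).symm.toMonoidHom x, hx, by show g * (g⁻¹ * x * g) * g⁻¹ = x; group⟩
  rw [h1, Subgroup.relIndex_comap, map_conj_self' N hN g]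

/-- Key construction: a subgroup `K ≤ N` of relative index `r` in `N`,
containing a nontrivial element if `2 ≤ n`. -/
private lemma evalKer_spec {G : Type*} [Group G] [Finite G] (N : Subgroup G) (r n : ℕ)
    (hr : r.Prime) (hn : 0 < n) (e : N ≃* Multiplicative (Fin n → ZMod r)) :
    ∃ K : Subgroup G, K ≤ N ∧ K.relIndex N = r ∧
      (2 ≤ n → ∃ x : G, x ∈ K ∧ x ≠ 1) := by
  haveI : Fact (1 < r) := ⟨hr.one_lt⟩
  set i0 : Fin n := ⟨0, hn⟩ with hi0
  set f : Multiplicative (Fin n → ZMod r) →* Multiplicative (ZMod r) :=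
    AddMonoidHom.toMultiplicative (Pi.evalAddMonoidHom (fun _ : Fin n => ZMod r) i0) with hf
  set K0 : Subgroup N := (f.comp e.toMonoidHom).ker with hK0
  refine ⟨K0.map N.subtype, map_subtype_le _, ?_, ?_⟩
  · have h1 : ((K0.map N.subtype).subgroupOf N) = K0 :=
      Subgroup.comap_map_eq_self_of_injective N.subtype_injective _
    rw [Subgroup.relIndex, h1, hK0, Subgroup.index_ker]
    have hsurj : Function.Surjective (f.comp e.toMonoidHom) := by
      intro z
      refine ⟨e.symm (Multiplicative.ofAdd (fun _ => Multiplicative.toAdd z)), ?_⟩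
      simp only [MonoidHom.comp_apply, MulEquiv.coe_toMonoidHom, MulEquiv.apply_symm_apply]
      rfl
    rw [MonoidHom.range_eq_top.mpr hsurj, Subgroup.card_top]
    have : Nat.card (Multiplicative (ZMod r)) = Nat.card (ZMod r) :=
      Nat.card_congr Multiplicative.toAdd
    rw [this, Nat.card_zmod]
  · intro hn2
    set v : Fin n → ZMod r := fun j => if j = i0 then 0 else 1 with hv
    have hmem : e.symm (Multiplicative.ofAdd v) ∈ K0 := by
      rw [hK0, MonoidHom.mem_ker]
      simp only [MonoidHom.comp_apply, MulEquiv.coe_toMonoidHom, MulEquiv.apply_symm_apply]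
      show Multiplicative.ofAdd (v i0) = 1
      simp [hv]
    refine ⟨(e.symm (Multiplicative.ofAdd v) : N), ⟨_, hmem, rfl⟩, ?_⟩
    intro hone
    have h1 : e.symm (Multiplicative.ofAdd v) = 1 := by
      exact_mod_cast hone
    have h2 : Multiplicative.ofAdd v = 1 := by
      have := congrArg e h1
      rwa [MulEquiv.apply_symm_apply, map_one] at this
    have h3 : v = 0 := by
      have := congrArg Multiplicative.toAdd h2
      simpa using this
    have h4 : v ⟨1, by omega⟩ = 0 := by rw [h3]; rfl
    rw [hv] at h4
    simp only at h4
    rw [if_neg (by simp [hi0, Fin.ext_iff])] at h4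
    exact one_ne_zero h4

private lemma card_of_iso {G : Type*} [Group G] (N : Subgroup G) (r n : ℕ)
    (e : N ≃* Multiplicative (Fin n → ZMod r)) : Nat.card N = r ^ n := by
  have h1 : Nat.card N = Nat.card (Multiplicative (Fin n → ZMod r)) :=
    Nat.card_congr e.toEquiv
  rw [h1]
  have : Nat.card (Multiplicative (Fin n → ZMod r)) = Nat.card (Fin n → ZMod r) :=
    Nat.card_congr (MulEquiv.refl _).toEquiv
  rw [this, Nat.card_fun]
  simp [Nat.card_zmod]

private lemma mem_sup_of_commute {G : Type*} [Group G] {A B : Subgroup G}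
    (h : ∀ a ∈ A, ∀ b ∈ B, a * b = b * a) (x : G) :
    x ∈ A ⊔ B ↔ ∃ a ∈ A, ∃ b ∈ B, a * b = x := by
  constructor
  · intro hx
    let S : Subgroup G :=
      { carrier := {x | ∃ a ∈ A, ∃ b ∈ B, a * b = x}
        one_mem' := ⟨1, A.one_mem, 1, B.one_mem, one_mul 1⟩
        mul_mem' := by
          rintro x y ⟨a₁, ha₁, b₁, hb₁, rfl⟩ ⟨a₂, ha₂, b₂, hb₂, rfl⟩
          refine ⟨a₁ * a₂, A.mul_mem ha₁ ha₂, b₁ * b₂, B.mul_mem hb₁ hb₂, ?_⟩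
          have hc := h a₂ ha₂ b₁ hb₁
          calc a₁ * a₂ * (b₁ * b₂) = a₁ * (a₂ * b₁) * b₂ := by group
            _ = a₁ * (b₁ * a₂) * b₂ := by rw [hc]
            _ = a₁ * b₁ * (a₂ * b₂) := by group
        inv_mem' := by
          rintro x ⟨a, ha, b, hb, rfl⟩
          refine ⟨a⁻¹, A.inv_mem ha, b⁻¹, B.inv_mem hb, ?_⟩
          rw [h a ha b hb, mul_inv_rev] }
    have hAS : A ≤ S := fun a ha => ⟨a, ha, 1, B.one_mem, mul_one a⟩
    have hBS : B ≤ S := fun b hb => ⟨1, A.one_mem, b, hb, one_mul b⟩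
    exact sup_le hAS hBS hx
  · rintro ⟨a, ha, b, hb, rfl⟩
    exact mul_mem (le_sup_left (a := A) (b := B) ha) (le_sup_right (a := A) (b := B) hb)

/-- If a finite group `G` has distinct minimal normal subgroups `N₁ ≅ (C_p)^a` and
`N₂ ≅ (C_q)^b` with `a ≥ 3` and `b ≥ 2`, then `G` has two non-conjugate core-free
subgroups `H₁, H₂` with `b(G, Hᵢ) ≥ 3`. -/
theorem stmt_4 {G : Type*} [Group G] [Finite G] (N₁ N₂ : Subgroup G) (p q a b : ℕ)
    (hp : p.Prime) (hq : q.Prime) (ha : 3 ≤ a) (hb : 2 ≤ b) (hne : N₁ ≠ N₂)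
    (hmin₁ : IsMinNormal N₁) (hmin₂ : IsMinNormal N₂)
    (hiso₁ : Nonempty (N₁ ≃* Multiplicative (Fin a → ZMod p)))
    (hiso₂ : Nonempty (N₂ ≃* Multiplicative (Fin b → ZMod q))) :
    ∃ H₁ H₂ : Subgroup G,
      H₁.normalCore = ⊥ ∧ H₂.normalCore = ⊥ ∧
      (∀ g : G, conjSub H₁ g ≠ H₂) ∧
      (∀ g : G, H₁ ⊓ conjSub H₁ g ≠ ⊥) ∧
      (∀ g : G, H₂ ⊓ conjSub H₂ g ≠ ⊥) := by
  obtain ⟨e₁⟩ := hiso₁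
  obtain ⟨e₂⟩ := hiso₂
  obtain ⟨hN₁ne, hN₁norm, hN₁min⟩ := hmin₁
  obtain ⟨hN₂ne, hN₂norm, hN₂min⟩ := hmin₂
  -- disjointness of the two minimal normal subgroups
  have hdisj : N₁ ⊓ N₂ = ⊥ := by
    have hnorm : (N₁ ⊓ N₂).Normal :=
      ⟨fun n hn g => ⟨hN₁norm.conj_mem _ hn.1 g, hN₂norm.conj_mem _ hn.2 g⟩⟩
    rcases hN₁min _ hnorm inf_le_left with h | h
    · exact h
    · have hle : N₁ ≤ N₂ := by rw [← h]; exact inf_le_right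
      rcases hN₂min _ hN₁norm hle with h' | h'
      · exact absurd h' hN₁ne
      · exact absurd h' hne
  have hcomm : ∀ x ∈ N₁, ∀ y ∈ N₂, x * y = y * x := fun x hx y hy =>
    Subgroup.commute_of_normal_of_disjoint _ _ hN₁norm hN₂norm
      (disjoint_iff.mpr hdisj) x y hx hy
  obtain ⟨K₁, hK₁le, hK₁rel, _⟩ := evalKer_spec N₁ p a hp (by omega) e₁
  obtain ⟨K₂, hK₂le, hK₂rel, hK₂elt⟩ := evalKer_spec N₂ q b hq (by omega) e₂
  obtain ⟨x₂, hx₂K, hx₂ne⟩ := hK₂elt hb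
  have hnotle₁ : ¬ N₁ ≤ K₁ := by
    intro hle
    have : K₁ = N₁ := le_antisymm hK₁le hle
    rw [this, Subgroup.relIndex_self] at hK₁rel
    exact hp.one_lt.ne' hK₁rel.symm
  have hnotle₂ : ¬ N₂ ≤ K₂ := by
    intro hle
    have : K₂ = N₂ := le_antisymm hK₂le hle
    rw [this, Subgroup.relIndex_self] at hK₂rel
    exact hq.one_lt.ne' hK₂rel.symm
  have hcomm' : ∀ x ∈ K₁, ∀ y ∈ K₂, x * y = y * x :=
    fun x hx y hy => hcomm x (hK₁le hx) y (hK₂le hy)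
  set H₂ : Subgroup G := K₁ ⊔ K₂ with hH₂def
  have memH₂ : ∀ x : G, x ∈ H₂ ↔ ∃ a ∈ K₁, ∃ b ∈ K₂, a * b = x :=
    mem_sup_of_commute hcomm'
  -- key intersection fact for K₁
  have hinf₁ : ∀ g : G, K₁ ⊓ conjSub K₁ g ≠ ⊥ := by
    intro g h
    have h2 : (conjSub K₁ g).relIndex N₁ = p := by
      rw [relindex_conjSub K₁ N₁ hN₁norm g, hK₁rel]
    have h3 := Subgroup.relIndex_inf_le (H := K₁) (K := conjSub K₁ g) (L := N₁)
    rw [h, Subgroup.relIndex_bot_left, hK₁rel, h2] at h3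
    have hcard : Nat.card N₁ = p ^ a := card_of_iso N₁ p a e₁
    rw [hcard] at h3
    have hp2 : 2 ≤ p := hp.two_le
    have h4 : p ^ 3 ≤ p ^ a := Nat.pow_le_pow_right (by omega) ha
    have h5 : p * p < p ^ 3 := by
      have h0 : 0 < p * p := Nat.mul_pos hp.pos hp.pos
      have h6 : p * p < p * p * p := (Nat.lt_mul_iff_one_lt_right h0).mpr hp.one_lt
      have h7 : p ^ 3 = p * p * p := by ring
      rw [h7]; exact h6
    exact absurd (h5.trans_le (h4.trans h3)) (lt_irrefl _)
  -- normal core of K₁ is trivial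
  have hcore₁ : K₁.normalCore = ⊥ := by
    rcases hN₁min K₁.normalCore (Subgroup.normalCore_normal K₁)
      ((Subgroup.normalCore_le K₁).trans hK₁le) with h | h
    · exact h
    · exact absurd (h ▸ Subgroup.normalCore_le K₁) hnotle₁
  -- normal core of H₂ is trivial
  have hcore₂ : H₂.normalCore = ⊥ := by
    set M := H₂.normalCore with hM
    have hMnorm : M.Normal := Subgroup.normalCore_normal H₂
    have hMle : M ≤ H₂ := Subgroup.normalCore_le H₂
    set P : Subgroup G :=
      { carrier := {x | x ∈ N₁ ∧ ∃ y ∈ N₂, x * y ∈ M}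
        one_mem' := ⟨N₁.one_mem, 1, N₂.one_mem, by simpa using M.one_mem⟩
        mul_mem' := by
          rintro x₁ x₂ ⟨hx₁, y₁, hy₁, hxy₁⟩ ⟨hx₂, y₂, hy₂, hxy₂⟩
          refine ⟨N₁.mul_mem hx₁ hx₂, y₁ * y₂, N₂.mul_mem hy₁ hy₂, ?_⟩
          have hc : x₂ * y₁ = y₁ * x₂ := hcomm x₂ hx₂ y₁ hy₁
          have : x₁ * x₂ * (y₁ * y₂) = (x₁ * y₁) * (x₂ * y₂) := by
            calc x₁ * x₂ * (y₁ * y₂) = x₁ * (x₂ * y₁) * y₂ := by group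
              _ = x₁ * (y₁ * x₂) * y₂ := by rw [hc]
              _ = (x₁ * y₁) * (x₂ * y₂) := by group
          rw [this]
          exact M.mul_mem hxy₁ hxy₂
        inv_mem' := by
          rintro x ⟨hx, y, hy, hxy⟩
          refine ⟨N₁.inv_mem hx, y⁻¹, N₂.inv_mem hy, ?_⟩
          have : x⁻¹ * y⁻¹ = (x * y)⁻¹ := by
            rw [← mul_inv_rev, hcomm x hx y hy, mul_inv_rev]
          rw [this]
          exact M.inv_mem hxy } with hPdef
    have hPnorm : P.Normal := by
      refine ⟨fun x hx g => ?_⟩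
      obtain ⟨hxN, y, hyN, hxy⟩ := hx
      refine ⟨hN₁norm.conj_mem x hxN g, g * y * g⁻¹, hN₂norm.conj_mem y hyN g, ?_⟩
      have heq : g * x * g⁻¹ * (g * y * g⁻¹) = g * (x * y) * g⁻¹ := by group
      rw [heq]
      exact hMnorm.conj_mem _ hxy g
    have hPle : P ≤ K₁ := by
      rintro x ⟨hxN, y, hyN, hxy⟩
      obtain ⟨c, hcK, d, hdK, hcd⟩ := (memH₂ _).1 (hMle hxy)
      have key : c⁻¹ * x = d * y⁻¹ := by
        have h1 : c * (d * y⁻¹) = c * (c⁻¹ * x) := by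
          rw [← mul_assoc, hcd]; group
        exact (mul_left_cancel h1).symm
      have hmem : c⁻¹ * x ∈ N₁ ⊓ N₂ := by
        refine ⟨N₁.mul_mem (N₁.inv_mem (hK₁le hcK)) hxN, ?_⟩
        rw [key]
        exact N₂.mul_mem (hK₂le hdK) (N₂.inv_mem hyN)
      rw [hdisj, Subgroup.mem_bot] at hmem
      have : x = c := by
        rwa [inv_mul_eq_one, eq_comm] at hmem
      rw [this]
      exact hcK
    rcases hN₁min P hPnorm (hPle.trans hK₁le) with hP | hP
    · -- P = ⊥, so M ≤ K₂
      have hMK₂ : M ≤ K₂ := by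
        intro m hm
        obtain ⟨c, hcK, d, hdK, hcd⟩ := (memH₂ _).1 (hMle hm)
        have hcP : c ∈ P := ⟨hK₁le hcK, d, hK₂le hdK, by rw [hcd]; exact hm⟩
        rw [hP, Subgroup.mem_bot] at hcP
        rw [hcP, one_mul] at hcd
        rw [← hcd]
        exact hdK
      rcases hN₂min M hMnorm (hMK₂.trans hK₂le) with h | h
      · exact h
      · exact absurd (h ▸ hMK₂) hnotle₂
    · exact absurd (hP ▸ hPle) hnotle₁
  refine ⟨K₁, H₂, hcore₁, hcore₂, ?_, hinf₁, ?_⟩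
  · -- non-conjugacy
    intro g hEq
    have hcardconj : Nat.card (conjSub K₁ g) = Nat.card K₁ :=
      (Nat.card_congr (Subgroup.equivMapOfInjective K₁ _
        (MulAut.conj g).injective).toEquiv).symm
    have hcard : Nat.card H₂ ≤ Nat.card K₁ := by
      rw [← hEq, hcardconj]
    have hK₁H₂ : K₁ = H₂ :=
      Subgroup.eq_of_le_of_card_ge le_sup_left hcard
    have hx₂H₂ : x₂ ∈ H₂ := le_sup_right (a := K₁) (b := K₂) hx₂K
    rw [← hK₁H₂] at hx₂H₂
    have : x₂ ∈ N₁ ⊓ N₂ := ⟨hK₁le hx₂H₂, hK₂le hx₂K⟩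
    rw [hdisj, Subgroup.mem_bot] at this
    exact hx₂ne this
  · -- intersections for H₂
    intro g h
    apply hinf₁ g
    have hle : K₁ ⊓ conjSub K₁ g ≤ H₂ ⊓ conjSub H₂ g :=
      inf_le_inf le_sup_left (Subgroup.map_mono le_sup_left)
    rw [h] at hle
    exact le_bot_iff.mp hle
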